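/- Let (X, ρ, μ) be a space of homogeneous type with lower dimension d (i.e., (R/r)^d ≲ V(x,R)/V(x,r)) and covering dimension Δ' (i.e., every ball B(x,R) can be covered by at most C'(R/r)^{Δ'} balls of radius r). Then d ≤ Δ'. -/

import Mathlib

open Set MeasureTheory
open scoped ENNReal NNReal

/-- The (open) ball of a quasi-metric. -/
def qball {X : Type*} (ρ : X → X → ℝ) (x : X) (r : ℝ) : Set X := {y | ρ x y < r}

lemma qball_mono {X : Type*} (ρ : X → X → ℝ) (x : X) {r R : ℝ} (h : r ≤ R) :
    qball ρ x r ⊆ qball ρ x R := fun y hy => lt_of_lt_of_le hy h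

/-- In a space of homogeneous type, the lower dimension `d` is at most
the covering dimension `Δ'`. -/
theorem lowerDim_le_coveringDim {X : Type*} [MeasurableSpace X] [Nonempty X]
    (ρ : X → X → ℝ) (μ : Measure X)
    (A₀ : ℝ) (hA₀ : 1 ≤ A₀)
    (hρ0 : ∀ x y, 0 ≤ ρ x y) (hρeq : ∀ x y, ρ x y = 0 ↔ x = y)
    (hρsymm : ∀ x y, ρ x y = ρ y x)
    (hρtri : ∀ x y z, ρ x y ≤ A₀ * (ρ x z + ρ z y))
    (hdoub : ∃ Cd : ℝ≥0, ∀ x r, 0 < r → μ (qball ρ x (2 * r)) ≤ Cd * μ (qball ρ x r))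
    (hpos : ∀ x r, 0 < r → 0 < μ (qball ρ x r))
    (hfin : ∀ x r, 0 < r → μ (qball ρ x r) < ⊤)
    (d Δ' cl Cc : ℝ) (hcl : 0 < cl) (hCc : 0 < Cc)
    (hlow : ∀ x r R, 0 < r → r ≤ R →
      ENNReal.ofReal (cl * (R / r) ^ d) * μ (qball ρ x r) ≤ μ (qball ρ x R))
    (hcov : ∀ x r R, 0 < r → r ≤ R → ∃ s : Finset X,
      (s.card : ℝ) ≤ Cc * (R / r) ^ Δ' ∧ qball ρ x R ⊆ ⋃ y ∈ s, qball ρ y r) :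
    d ≤ Δ' := by
  classical
  obtain ⟨Cd, hCd⟩ := hdoub
  obtain ⟨x⟩ := ‹Nonempty X›
  have hA₀0 : 0 < A₀ := lt_of_lt_of_le one_pos hA₀
  set K₁ : ℝ := A₀ * (2 * A₀ + 1) with hK₁def
  set K₂ : ℝ := A₀ * (2 * A₀ + K₁) with hK₂def
  have hK₁1 : 1 ≤ K₁ := by nlinarith
  have hK₁0 : 0 < K₁ := lt_of_lt_of_le one_pos hK₁1
  -- iterated doubling
  have hiter : ∀ (n : ℕ) (z : X) (r : ℝ), 0 < r →
      μ (qball ρ z (2 ^ n * r)) ≤ (Cd : ℝ≥0∞) ^ n * μ (qball ρ z r) := by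
    intro n
    induction n with
    | zero => intro z r hr; simp
    | succ n ih =>
      intro z r hr
      have h1 : (2 : ℝ) ^ (n + 1) * r = 2 * (2 ^ n * r) := by ring
      have h2 : 0 < (2 : ℝ) ^ n * r := by positivity
      calc μ (qball ρ z (2 ^ (n + 1) * r)) = μ (qball ρ z (2 * (2 ^ n * r))) := by rw [h1]
        _ ≤ (Cd : ℝ≥0∞) * μ (qball ρ z (2 ^ n * r)) := hCd z _ h2
        _ ≤ (Cd : ℝ≥0∞) * ((Cd : ℝ≥0∞) ^ n * μ (qball ρ z r)) :=
            mul_le_mul_right (ih z r hr) _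
        _ = (Cd : ℝ≥0∞) ^ (n + 1) * μ (qball ρ z r) := by ring
  obtain ⟨n, hn⟩ : ∃ n : ℕ, K₂ < 2 ^ n := pow_unbounded_of_one_lt K₂ one_lt_two
  -- key inequality for all t ≥ 1
  have key : ∀ t : ℝ, 1 ≤ t → cl * (K₁ * t) ^ d ≤ Cc * t ^ Δ' * (Cd : ℝ) ^ n := by
    intro t ht
    have ht0 : 0 < t := lt_of_lt_of_le one_pos ht
    obtain ⟨s, hcard, hsub⟩ := hcov x 1 t one_pos ht
    set s' : Finset X := s.filter (fun y => (qball ρ y 1 ∩ qball ρ x t).Nonempty) with hs'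
    -- covering with s'
    have hsub' : qball ρ x t ⊆ ⋃ y ∈ s', qball ρ y 1 := by
      intro z hz
      obtain ⟨y, hy, hzy⟩ := Set.mem_iUnion₂.1 (hsub hz)
      exact Set.mem_iUnion₂.2 ⟨y, Finset.mem_filter.2 ⟨hy, ⟨z, hzy, hz⟩⟩, hzy⟩
    set V := μ (qball ρ x t) with hV
    set a : ℝ≥0∞ := ENNReal.ofReal (cl * (K₁ * t / 1) ^ d) with ha
    -- each small ball has small measure
    have hball : ∀ y ∈ s', a * μ (qball ρ y 1) ≤ (Cd : ℝ≥0∞) ^ n * V := by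
      intro y hy
      obtain ⟨-, w, hw1, hw2⟩ := Finset.mem_filter.1 hy
      have hxy : ρ x y < 2 * A₀ * t := by
        have h1 : ρ x y ≤ A₀ * (ρ x w + ρ w y) := hρtri x y w
        have h2 : ρ w y = ρ y w := hρsymm w y
        have h3 : ρ y w < 1 := hw1
        have h4 : ρ x w < t := hw2
        nlinarith [hρ0 x w, hρ0 y w]
      have hsub1 : qball ρ y (K₁ * t) ⊆ qball ρ x (K₂ * t) := by
        intro z hz
        have h1 : ρ x z ≤ A₀ * (ρ x y + ρ y z) := hρtri x z y
        have h2 : ρ y z < K₁ * t := hz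
        show ρ x z < K₂ * t
        rw [hK₂def]; nlinarith [hρ0 x y, hρ0 y z]
      have h1le : (1 : ℝ) ≤ K₁ * t := le_trans hK₁1 (by nlinarith)
      calc a * μ (qball ρ y 1) ≤ μ (qball ρ y (K₁ * t)) := hlow y 1 (K₁ * t) one_pos h1le
        _ ≤ μ (qball ρ x (K₂ * t)) := measure_mono hsub1
        _ ≤ μ (qball ρ x (2 ^ n * t)) :=
            measure_mono (qball_mono ρ x (by nlinarith))
        _ ≤ (Cd : ℝ≥0∞) ^ n * V := hiter n x t ht0
    -- main chain
    have hcardE : (s'.card : ℝ≥0∞) ≤ ENNReal.ofReal (Cc * t ^ Δ') := by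
      have h1 : (s'.card : ℝ) ≤ Cc * t ^ Δ' := by
        refine le_trans ?_ (by simpa using hcard)
        exact_mod_cast Finset.card_le_card (Finset.filter_subset _ s)
      calc (s'.card : ℝ≥0∞) = ENNReal.ofReal (s'.card : ℝ) := by
            simp [ENNReal.ofReal_natCast]
        _ ≤ ENNReal.ofReal (Cc * t ^ Δ') := ENNReal.ofReal_le_ofReal h1
    have hmain : a * V ≤ ENNReal.ofReal (Cc * t ^ Δ') * ((Cd : ℝ≥0∞) ^ n * V) := by
      calc a * V ≤ a * ∑ y ∈ s', μ (qball ρ y 1) :=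
            mul_le_mul_right (le_trans (measure_mono hsub')
              (measure_biUnion_finset_le s' _)) a
        _ = ∑ y ∈ s', a * μ (qball ρ y 1) := Finset.mul_sum _ _ _
        _ ≤ ∑ _y ∈ s', (Cd : ℝ≥0∞) ^ n * V := Finset.sum_le_sum hball
        _ = (s'.card : ℝ≥0∞) * ((Cd : ℝ≥0∞) ^ n * V) := by
            rw [Finset.sum_const, nsmul_eq_mul]
        _ ≤ ENNReal.ofReal (Cc * t ^ Δ') * ((Cd : ℝ≥0∞) ^ n * V) :=
            mul_le_mul_left hcardE _
    have hV0 : V ≠ 0 := (hpos x t ht0).ne'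
    have hVt : V ≠ ⊤ := (hfin x t ht0).ne
    have hab : a ≤ ENNReal.ofReal (Cc * t ^ Δ') * (Cd : ℝ≥0∞) ^ n := by
      rw [← ENNReal.mul_le_mul_iff_left hV0 hVt]
      calc a * V ≤ ENNReal.ofReal (Cc * t ^ Δ') * ((Cd : ℝ≥0∞) ^ n * V) := hmain
        _ = ENNReal.ofReal (Cc * t ^ Δ') * (Cd : ℝ≥0∞) ^ n * V := by ring
    have hrhs : ENNReal.ofReal (Cc * t ^ Δ') * (Cd : ℝ≥0∞) ^ n
        = ENNReal.ofReal (Cc * t ^ Δ' * (Cd : ℝ) ^ n) := by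
      rw [ENNReal.ofReal_mul (by positivity : (0:ℝ) ≤ Cc * t ^ Δ')]
      congr 1
      rw [ENNReal.ofReal_pow Cd.coe_nonneg, ENNReal.ofReal_coe_nnreal]
    rw [ha, hrhs, div_one] at hab
    have := (ENNReal.ofReal_le_ofReal_iff (by positivity)).1 hab
    linarith
  -- conclude by contradiction
  by_contra hlt
  push_neg at hlt
  set ε : ℝ := d - Δ' with hε
  have hε0 : 0 < ε := by simp [hε]; linarith
  set C2 : ℝ := Cc * (Cd : ℝ) ^ n with hC2
  have hC2nn : 0 ≤ C2 := by positivity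
  set C3 : ℝ := C2 / (cl * K₁ ^ d) with hC3
  have hclK : 0 < cl * K₁ ^ d := by positivity
  have hC3nn : 0 ≤ C3 := div_nonneg hC2nn hclK.le
  set t : ℝ := max 1 ((C3 + 1) ^ (1 / ε)) with htdef
  have ht1 : 1 ≤ t := le_max_left _ _
  have ht0 : 0 < t := lt_of_lt_of_le one_pos ht1
  have hkey := key t ht1
  -- rewrite (K₁ * t)^d = K₁^d * t^d and t^d = t^Δ' * t^ε
  have h1 : (K₁ * t) ^ d = K₁ ^ d * t ^ d := Real.mul_rpow hK₁0.le ht0.le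
  have h2 : t ^ d = t ^ Δ' * t ^ ε := by
    rw [← Real.rpow_add ht0, hε]; ring_nf
  have h3 : cl * K₁ ^ d * t ^ ε * t ^ Δ' ≤ C2 * t ^ Δ' := by
    calc cl * K₁ ^ d * t ^ ε * t ^ Δ' = cl * (K₁ * t) ^ d := by rw [h1, h2]; ring
      _ ≤ Cc * t ^ Δ' * (Cd : ℝ) ^ n := hkey
      _ = C2 * t ^ Δ' := by rw [hC2]; ring
  have htΔ : 0 < t ^ Δ' := Real.rpow_pos_of_pos ht0 _
  have h4 : cl * K₁ ^ d * t ^ ε ≤ C2 := le_of_mul_le_mul_right h3 htΔ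
  have h5 : t ^ ε ≤ C3 := by
    rw [hC3, le_div_iff₀ hclK]; linarith
  have h6 : C3 + 1 ≤ t ^ ε := by
    have hbase : (0 : ℝ) ≤ (C3 + 1) ^ (1 / ε) := Real.rpow_nonneg (by linarith) _
    have h7 : ((C3 + 1) ^ (1 / ε)) ^ ε ≤ t ^ ε :=
      Real.rpow_le_rpow hbase (le_max_right _ _) hε0.le
    calc C3 + 1 = (C3 + 1) ^ ((1 / ε) * ε) := by
          rw [one_div_mul_cancel hε0.ne', Real.rpow_one]
      _ = ((C3 + 1) ^ (1 / ε)) ^ ε := Real.rpow_mul (by linarith) _ _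
      _ ≤ t ^ ε := h7
  linarith
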